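/- Let Q ⊆ ℝ^d be a convex set containing a Euclidean ball B(x*, ε) with center x* ∈ B(0,1) and ε ≤ 1. Suppose x_t is a sequence with x₀ = 0 such that at every step t, either x_t ∈ Q, or there exist vectors g_t with ‖g_t‖ = 1 and g_t^⊤(x' - x_t) ≥ 0 for all x' ∈ Q, and the update satisfies ‖x_{t+1} - (x_t + ε g̃_t)‖ ≤ η and ‖g̃_t - g_t‖ ≤ η with η = ε²/40. Then after at most T = 8/ε² steps the process must reach a point in Q; i.e., there exists t ≤ T with x_t ∈ Q. -/

import Mathlib

set_option maxHeartbeats 1000000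


/-- Correctness of memory-constrained gradient descent for the feasibility problem:
if `Q` is convex and contains a ball `B(x*, ε)` with `‖x*‖ ≤ 1`, and the iterates follow
inexact separation-vector updates with accuracy `η = ε²/40`, then within `8/ε²` steps
the process reaches a point of `Q`. -/
theorem gradient_descent_feasibility (d : ℕ) (Q : Set (EuclideanSpace ℝ (Fin d)))
    (hQ : Convex ℝ Q) (xstar : EuclideanSpace ℝ (Fin d)) (hxstar : ‖xstar‖ ≤ 1)
    (ε : ℝ) (hε : 0 < ε) (hε1 : ε ≤ 1)
    (hball : Metric.closedBall xstar ε ⊆ Q)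
    (x : ℕ → EuclideanSpace ℝ (Fin d)) (hx0 : x 0 = 0)
    (hstep : ∀ t : ℕ, x t ∉ Q →
      ∃ g gtil : EuclideanSpace ℝ (Fin d), ‖g‖ = 1 ∧
        (∀ x' ∈ Q, (0 : ℝ) ≤ inner ℝ g (x' - x t)) ∧
        ‖gtil - g‖ ≤ ε ^ 2 / 40 ∧
        ‖x (t + 1) - (x t + ε • gtil)‖ ≤ ε ^ 2 / 40) :
    ∃ t : ℕ, (t : ℝ) ≤ 8 / ε ^ 2 ∧ x t ∈ Q := by
  by_contra hcon
  push_neg at hcon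
  have hε2 : (0:ℝ) < ε ^ 2 := by positivity
  -- one-step decrease
  have key : ∀ t, x t ∉ Q → ‖x t - xstar‖ ≤ 1 →
      ‖x (t+1) - xstar‖ ^ 2 ≤ ‖x t - xstar‖ ^ 2 - ε ^ 2 / 2 := by
    intro t hnot hle
    obtain ⟨g, gtil, hg1, hsep, hgt, hupd⟩ := hstep t hnot
    have hx' : xstar - ε • g ∈ Q := by
      apply hball
      simp only [Metric.mem_closedBall, dist_eq_norm]
      have : xstar - ε • g - xstar = -(ε • g) := by abel
      rw [this, norm_neg, norm_smul, hg1, Real.norm_eq_abs, abs_of_pos hε, mul_one]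
    have hinner : ε ≤ inner ℝ g (xstar - x t) := by
      have h0 := hsep _ hx'
      have hexp : (inner ℝ g (xstar - ε • g - x t) : ℝ)
          = inner ℝ g (xstar - x t) - ε * inner ℝ g g := by
        rw [show xstar - ε • g - x t = (xstar - x t) - ε • g by abel]
        rw [inner_sub_right, real_inner_smul_right]
      have hgg : (inner ℝ g g : ℝ) = 1 := by
        rw [real_inner_self_eq_norm_sq, hg1]; norm_num
      rw [hexp, hgg, mul_one] at h0
      linarith
    set y := x t + ε • g with hy
    have hysq : ‖y - xstar‖ ^ 2 ≤ ‖x t - xstar‖ ^ 2 - ε ^ 2 := by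
      have hexp : y - xstar = (x t - xstar) + ε • g := by rw [hy]; abel
      rw [hexp, norm_add_sq_real, real_inner_smul_right, norm_smul, hg1,
        Real.norm_eq_abs, abs_of_pos hε, mul_one]
      have hsym : (inner ℝ (x t - xstar) g : ℝ) = - inner ℝ g (xstar - x t) := by
        rw [real_inner_comm, ← inner_neg_right]
        congr 1
        abel
      rw [hsym]
      nlinarith
    have herr : ‖x (t+1) - y‖ ≤ 2 * (ε ^ 2 / 40) := by
      have hdecomp : x (t+1) - y = (x (t+1) - (x t + ε • gtil)) + ε • (gtil - g) := by
        rw [hy, smul_sub]; abel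
      calc ‖x (t+1) - y‖ ≤ ‖x (t+1) - (x t + ε • gtil)‖ + ‖ε • (gtil - g)‖ := by
            rw [hdecomp]; exact norm_add_le _ _
        _ ≤ ε ^ 2 / 40 + ε * (ε ^ 2 / 40) := by
            rw [norm_smul, Real.norm_eq_abs, abs_of_pos hε]
            have := mul_le_mul_of_nonneg_left hgt (le_of_lt hε)
            linarith
        _ ≤ 2 * (ε ^ 2 / 40) := by nlinarith
    have hA0 : (0:ℝ) ≤ ‖y - xstar‖ := norm_nonneg _
    have hP1 : ‖x t - xstar‖ ^ 2 ≤ 1 := by nlinarith [norm_nonneg (x t - xstar)]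
    have hA1 : ‖y - xstar‖ ≤ 1 := by nlinarith [sq_nonneg (‖y - xstar‖ - 1)]
    have htri : ‖x (t+1) - xstar‖ ≤ ‖y - xstar‖ + 2 * (ε ^ 2 / 40) := by
      calc ‖x (t+1) - xstar‖ = ‖(x (t+1) - y) + (y - xstar)‖ := by congr 1; abel
        _ ≤ ‖x (t+1) - y‖ + ‖y - xstar‖ := norm_add_le _ _
        _ ≤ ‖y - xstar‖ + 2 * (ε ^ 2 / 40) := by linarith
    have h1 : ‖x (t+1) - xstar‖ ^ 2 ≤ (‖y - xstar‖ + 2 * (ε ^ 2 / 40)) ^ 2 :=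
      pow_le_pow_left₀ (norm_nonneg _) htri 2
    have hε21 : ε ^ 2 ≤ 1 := by nlinarith [hε1, hε.le]
    have hexp2 : (‖y - xstar‖ + 2 * (ε ^ 2 / 40)) ^ 2
        = ‖y - xstar‖ ^ 2 + 4 * (ε ^ 2 / 40) * ‖y - xstar‖ + 4 * (ε ^ 2 / 40) ^ 2 := by
      ring
    have hmul : 4 * (ε ^ 2 / 40) * ‖y - xstar‖ ≤ 4 * (ε ^ 2 / 40) := by
      nlinarith
    have hsq : 4 * (ε ^ 2 / 40) ^ 2 ≤ ε ^ 2 / 400 := by nlinarith [sq_nonneg ε, sq_nonneg (ε^2)]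
    rw [hexp2] at h1
    linarith
  -- invariant
  have main : ∀ t : ℕ, (t : ℝ) ≤ 8 / ε ^ 2 → ‖x t - xstar‖ ^ 2 ≤ 1 - t * (ε ^ 2 / 2) := by
    intro t
    induction t with
    | zero =>
      intro _
      rw [hx0]
      simp only [zero_sub, norm_neg, Nat.cast_zero, zero_mul, sub_zero]
      nlinarith [norm_nonneg xstar]
    | succ n ih =>
      intro hle
      have hn : (n : ℝ) ≤ 8 / ε ^ 2 := by
        push_cast at hle ⊢; linarith
      have hIH := ih hn
      have hnQ : x n ∉ Q := fun h => hcon n hn h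
      have hle1 : ‖x n - xstar‖ ≤ 1 := by
        nlinarith [norm_nonneg (x n - xstar), mul_nonneg (Nat.cast_nonneg (α := ℝ) n) (le_of_lt (half_pos hε2))]
      have := key n hnQ hle1
      push_cast
      linarith
  -- contradiction at t = floor(8/ε²)
  set N := Nat.floor (8 / ε ^ 2) with hN
  have hNle : (N : ℝ) ≤ 8 / ε ^ 2 := Nat.floor_le (by positivity)
  have hNgt : 8 / ε ^ 2 < (N : ℝ) + 1 := Nat.lt_floor_add_one _
  have hmain := main N hNle
  have h0 : (0:ℝ) ≤ ‖x N - xstar‖ ^ 2 := by positivity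
  -- N ≥ 8/ε² - 1 > 2/ε², but bound gives N ≤ 2/ε²
  have h8 : (8 / ε ^ 2) * ε ^ 2 = 8 := div_mul_cancel₀ 8 (ne_of_gt hε2)
  nlinarith
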